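/- Let (Aₙ) be a sequence of invertible linear maps on a finite-dimensional real inner product space, let v_s, u, v be vectors with v_s = c·u + v where c ≠ 0, ‖Aₙ v_s‖ → 0, ‖Aₙ u‖ → ∞, and ‖Aₙ v‖ → ∞. Then the angle between Aₙ u and Aₙ v tends to 0 as n → ∞ (i.e., the distance between the unit vectors Aₙu/‖Aₙu‖ and ±Aₙv/‖Aₙv‖ tends to 0 along a suitable choice of signs; equivalently, the sine of the angle between the lines spanned by Aₙu and Aₙv tends to 0). -/

import Mathlib

open Filter

theorem stmt_2 {V : Type*} [NormedAddCommGroup V] [InnerProductSpace ℝ V]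
    [FiniteDimensional ℝ V] (A : ℕ → (V →ₗ[ℝ] V)) (hA : ∀ n, Function.Bijective (A n))
    (vs u v : V) (c : ℝ) (hc : c ≠ 0) (hvs : vs = c • u + v)
    (hs : Tendsto (fun n => ‖A n vs‖) atTop (nhds 0))
    (hu : Tendsto (fun n => ‖A n u‖) atTop atTop)
    (hv : Tendsto (fun n => ‖A n v‖) atTop atTop) :
    Tendsto (fun n => Real.arccos (|(inner ℝ (A n u) (A n v) : ℝ)| / (‖A n u‖ * ‖A n v‖)))
      atTop (nhds 0) := by
  have hc' : (0:ℝ) < |c| := abs_pos.mpr hc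
  have hg : Tendsto (fun n => ‖A n vs‖ / ‖A n u‖) atTop (nhds 0) := by
    have h1 : Tendsto (fun n => (‖A n u‖)⁻¹) atTop (nhds 0) := hu.inv_tendsto_atTop
    have := hs.mul h1
    simpa [div_eq_mul_inv] using this
  have hf : Tendsto (fun n => (|c| - ‖A n vs‖ / ‖A n u‖) / (|c| + ‖A n vs‖ / ‖A n u‖))
      atTop (nhds 1) := by
    have hn1 : Tendsto (fun n => |c| - ‖A n vs‖ / ‖A n u‖) atTop (nhds (|c| - 0)) :=
      tendsto_const_nhds.sub hg
    have hn2 : Tendsto (fun n => |c| + ‖A n vs‖ / ‖A n u‖) atTop (nhds (|c| + 0)) :=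
      tendsto_const_nhds.add hg
    have := hn1.div hn2 (by simpa using hc'.ne')
    simpa [div_self hc'.ne', Pi.div_def] using this
  have hvv : v = vs - c • u := by rw [hvs]; abel
  have key : Tendsto (fun n => |(inner ℝ (A n u) (A n v) : ℝ)| / (‖A n u‖ * ‖A n v‖))
      atTop (nhds 1) := by
    apply tendsto_of_tendsto_of_tendsto_of_le_of_le' hf tendsto_const_nhds
    · have e1 : ∀ᶠ n in atTop, ‖A n vs‖ ≤ 1 :=
        (hs.eventually (gt_mem_nhds one_pos)).mono fun n h => h.le
      have e2 : ∀ᶠ n in atTop, max 1 (1/|c|) ≤ ‖A n u‖ := hu.eventually_ge_atTop _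
      have e3 : ∀ᶠ n in atTop, (1:ℝ) ≤ ‖A n v‖ := hv.eventually_ge_atTop 1
      filter_upwards [e1, e2, e3] with n h1 h2 h3
      set a := ‖A n u‖ with ha
      set s := ‖A n vs‖ with hsn
      set b := ‖A n v‖ with hb
      have ha1 : (1:ℝ) ≤ a := le_trans (le_max_left _ _) h2
      have ha0 : (0:ℝ) < a := lt_of_lt_of_le one_pos ha1
      have hb0 : (0:ℝ) < b := lt_of_lt_of_le one_pos h3
      have hs0 : (0:ℝ) ≤ s := norm_nonneg _
      have hca : (1:ℝ) ≤ |c| * a := by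
        have := le_trans (le_max_right 1 (1/|c|)) h2
        rw [div_le_iff₀ hc'] at this
        linarith [this]
      have hsca : s ≤ |c| * a := le_trans h1 hca
      -- A n v = A n vs - c • A n u
      have hAv : A n v = A n vs - c • A n u := by
        rw [hvv]; simp [map_sub, map_smul]
      have hinner : (inner ℝ (A n u) (A n v) : ℝ)
          = (inner ℝ (A n u) (A n vs) : ℝ) - c * a ^ 2 := by
        rw [hAv, inner_sub_right, real_inner_smul_right, real_inner_self_eq_norm_sq]
      have hCS : |(inner ℝ (A n u) (A n vs) : ℝ)| ≤ a * s := abs_real_inner_le_norm _ _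
      have hnum : |c| * a ^ 2 - a * s ≤ |(inner ℝ (A n u) (A n v) : ℝ)| := by
        rw [hinner]
        have h4 : |c * a ^ 2| - |(inner ℝ (A n u) (A n vs) : ℝ)|
            ≤ |(inner ℝ (A n u) (A n vs) : ℝ) - c * a ^ 2| := by
          rw [abs_sub_comm]
          exact le_trans (sub_le_sub_left (le_refl _) _) (abs_sub_abs_le_abs_sub _ _)
        have h5 : |c * a ^ 2| = |c| * a ^ 2 := by
          rw [abs_mul, abs_of_nonneg (by positivity : (0:ℝ) ≤ a ^ 2)]
        linarith [h4, h5 ▸ h4, hCS]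
      have hden : b ≤ s + |c| * a := by
        rw [hb, hAv]
        calc ‖A n vs - c • A n u‖ ≤ ‖A n vs‖ + ‖c • A n u‖ := norm_sub_le _ _
          _ = s + |c| * a := by rw [norm_smul, Real.norm_eq_abs]
      have step1 : (|c| - s / a) / (|c| + s / a)
          = (|c| * a ^ 2 - a * s) / (a * (s + |c| * a)) := by
        field_simp
        ring
      rw [step1]
      apply div_le_div₀ (abs_nonneg _) hnum (by positivity)
      calc a * b ≤ a * (s + |c| * a) := by nlinarith [hden, ha0]
        _ ≤ a * (s + |c| * a) := le_refl _
    · filter_upwards with n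
      exact div_le_one_of_le₀ (by
        simpa [abs_mul] using abs_real_inner_le_norm (A n u) (A n v))
        (by positivity)
  have harccos := (Real.continuous_arccos.tendsto 1).comp key
  simpa [Function.comp_def, Real.arccos_one] using harccos
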